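/- Let J be a real m×n matrix and L a real p×n matrix satisfying the completeness condition with constant γ > 0, let λ > 0 and F ∈ ℝᵐ, let d solve (JᵀJ + λLᵀL)d = −JᵀF, and set g = JᵀF and M = ‖J‖² + λ‖L‖² (spectral norms). Then ‖g‖ ≤ M‖d‖, and consequently gᵀd ≤ −(γ·min{1, λ}/M²)·‖g‖² (provided M > 0). -/
import Mathlib

open Matrix RealInnerProductSpace

/-- The continuous linear map on Euclidean spaces induced by a real matrix. -/
noncomputable def matCLM {m n : ℕ} (A : Matrix (Fin m) (Fin n) ℝ) :
    EuclideanSpace ℝ (Fin n) →L[ℝ] EuclideanSpace ℝ (Fin m) :=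
  LinearMap.toContinuousLinearMap (Matrix.toEuclideanLin A)

lemma matCLM_mul {m n p : ℕ} (A : Matrix (Fin m) (Fin n) ℝ) (B : Matrix (Fin n) (Fin p) ℝ)
    (v : EuclideanSpace ℝ (Fin p)) : matCLM (A * B) v = matCLM A (matCLM B v) := by
  simp [matCLM, Matrix.toEuclideanLin_apply, Matrix.mulVec_mulVec]

lemma matCLM_add {m n : ℕ} (A B : Matrix (Fin m) (Fin n) ℝ) (v : EuclideanSpace ℝ (Fin n)) :
    matCLM (A + B) v = matCLM A v + matCLM B v := by
  simp [matCLM, map_add]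

lemma matCLM_smul {m n : ℕ} (c : ℝ) (A : Matrix (Fin m) (Fin n) ℝ) (v : EuclideanSpace ℝ (Fin n)) :
    matCLM (c • A) v = c • matCLM A v := by
  simp [matCLM, _root_.map_smul]

lemma matCLM_transpose {m n : ℕ} (A : Matrix (Fin m) (Fin n) ℝ) :
    matCLM Aᵀ = ContinuousLinearMap.adjoint (matCLM A) := by
  have h : (Aᵀ : Matrix (Fin n) (Fin m) ℝ) = Aᴴ := by
    ext i j; simp [Matrix.conjTranspose_apply]
  rw [matCLM, h, Matrix.toEuclideanLin_conjTranspose_eq_adjoint,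
    LinearMap.adjoint_toContinuousLinearMap]
  rfl

/-- under the completeness condition with constant `γ > 0`, if `d` solves
`(JᵀJ + λLᵀL)d = −JᵀF`, `g = JᵀF` and `M = ‖J‖² + λ‖L‖²` (spectral norms), then
`‖g‖ ≤ M‖d‖`, and if `M > 0` then `gᵀd ≤ −(γ·min{1,λ}/M²)·‖g‖²`. -/
theorem lmmss_gradient_bound
    (m n p : ℕ) (J : Matrix (Fin m) (Fin n) ℝ) (L : Matrix (Fin p) (Fin n) ℝ)
    (γ : ℝ) (hγ : 0 < γ)
    (hcomp : ∀ v : EuclideanSpace ℝ (Fin n),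
      ‖matCLM J v‖ ^ 2 + ‖matCLM L v‖ ^ 2 ≥ γ * ‖v‖ ^ 2)
    (lam : ℝ) (hlam : 0 < lam) (F : EuclideanSpace ℝ (Fin m))
    (d : EuclideanSpace ℝ (Fin n))
    (hd : matCLM (Jᵀ * J + lam • (Lᵀ * L)) d = -(matCLM Jᵀ F)) :
    ‖matCLM Jᵀ F‖ ≤ (‖matCLM J‖ ^ 2 + lam * ‖matCLM L‖ ^ 2) * ‖d‖ ∧
      (0 < ‖matCLM J‖ ^ 2 + lam * ‖matCLM L‖ ^ 2 →
        ⟪matCLM Jᵀ F, d⟫ ≤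
          -(γ * min 1 lam / (‖matCLM J‖ ^ 2 + lam * ‖matCLM L‖ ^ 2) ^ 2) *
            ‖matCLM Jᵀ F‖ ^ 2) := by
  set A := matCLM J with hA
  set B := matCLM L with hB
  set g := matCLM Jᵀ F with hg
  set M := ‖A‖ ^ 2 + lam * ‖B‖ ^ 2 with hM
  have hgadj : g = ContinuousLinearMap.adjoint A F := by
    rw [hg, matCLM_transpose]
  have hd' : ContinuousLinearMap.adjoint A (A d) +
      lam • ContinuousLinearMap.adjoint B (B d) = -g := by
    have := hd
    rw [matCLM_add, matCLM_smul, matCLM_mul, matCLM_mul, matCLM_transpose,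
      matCLM_transpose] at this
    exact this
  -- norm bound
  have h1 : ‖g‖ ≤ M * ‖d‖ := by
    have : ‖g‖ = ‖ContinuousLinearMap.adjoint A (A d) +
        lam • ContinuousLinearMap.adjoint B (B d)‖ := by
      rw [hd', norm_neg]
    rw [this]
    have hAn : ‖ContinuousLinearMap.adjoint A (A d)‖ ≤ ‖A‖ ^ 2 * ‖d‖ := by
      calc ‖ContinuousLinearMap.adjoint A (A d)‖ ≤ ‖ContinuousLinearMap.adjoint A‖ * ‖A d‖ :=
            ContinuousLinearMap.le_opNorm _ _
        _ ≤ ‖A‖ * (‖A‖ * ‖d‖) := by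
            rw [ContinuousLinearMap.adjoint.norm_map A]
            exact mul_le_mul_of_nonneg_left (ContinuousLinearMap.le_opNorm _ _) (norm_nonneg _)
        _ = ‖A‖ ^ 2 * ‖d‖ := by ring
    have hBn : ‖ContinuousLinearMap.adjoint B (B d)‖ ≤ ‖B‖ ^ 2 * ‖d‖ := by
      calc ‖ContinuousLinearMap.adjoint B (B d)‖ ≤ ‖ContinuousLinearMap.adjoint B‖ * ‖B d‖ :=
            ContinuousLinearMap.le_opNorm _ _
        _ ≤ ‖B‖ * (‖B‖ * ‖d‖) := by
            rw [ContinuousLinearMap.adjoint.norm_map B]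
            exact mul_le_mul_of_nonneg_left (ContinuousLinearMap.le_opNorm _ _) (norm_nonneg _)
        _ = ‖B‖ ^ 2 * ‖d‖ := by ring
    calc ‖ContinuousLinearMap.adjoint A (A d) + lam • ContinuousLinearMap.adjoint B (B d)‖
        ≤ ‖ContinuousLinearMap.adjoint A (A d)‖ + ‖lam • ContinuousLinearMap.adjoint B (B d)‖ :=
          norm_add_le _ _
      _ ≤ ‖A‖ ^ 2 * ‖d‖ + lam * (‖B‖ ^ 2 * ‖d‖) := by
          rw [norm_smul, Real.norm_eq_abs, abs_of_pos hlam]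
          exact add_le_add hAn (mul_le_mul_of_nonneg_left hBn hlam.le)
      _ = M * ‖d‖ := by rw [hM]; ring
  refine ⟨h1, fun hMpos => ?_⟩
  -- inner product identity
  have hinner : ⟪g, d⟫ = -(‖A d‖ ^ 2 + lam * ‖B d‖ ^ 2) := by
    have : ⟪(-g : EuclideanSpace ℝ (Fin n)), d⟫ = ‖A d‖ ^ 2 + lam * ‖B d‖ ^ 2 := by
      rw [← hd', inner_add_left, inner_smul_left, ContinuousLinearMap.adjoint_inner_left,
        ContinuousLinearMap.adjoint_inner_left, real_inner_self_eq_norm_sq,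
        real_inner_self_eq_norm_sq]
      simp [RCLike.star_def]
    rw [inner_neg_left] at this
    linarith
  have hcompd := hcomp d
  have hmin : 0 < min 1 lam := lt_min one_pos hlam
  have hmle1 : min 1 lam ≤ 1 := min_le_left _ _
  have hmlelam : min 1 lam ≤ lam := min_le_right _ _
  have h2 : ⟪g, d⟫ ≤ -(γ * min 1 lam * ‖d‖ ^ 2) := by
    rw [hinner]
    have hAd : (0:ℝ) ≤ ‖A d‖ ^ 2 := sq_nonneg _
    have hBd : (0:ℝ) ≤ ‖B d‖ ^ 2 := sq_nonneg _
    have e1 : min 1 lam * ‖A d‖ ^ 2 ≤ 1 * ‖A d‖ ^ 2 :=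
      mul_le_mul_of_nonneg_right hmle1 hAd
    have e2 : min 1 lam * ‖B d‖ ^ 2 ≤ lam * ‖B d‖ ^ 2 :=
      mul_le_mul_of_nonneg_right hmlelam hBd
    have e3 : min 1 lam * (γ * ‖d‖ ^ 2) ≤ min 1 lam * (‖A d‖ ^ 2 + ‖B d‖ ^ 2) :=
      mul_le_mul_of_nonneg_left hcompd hmin.le
    linarith
  -- ‖d‖ ≥ ‖g‖ / M
  have hdge : ‖g‖ ^ 2 ≤ M ^ 2 * ‖d‖ ^ 2 := by
    have := pow_le_pow_left₀ (norm_nonneg g) h1 2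
    rwa [mul_pow] at this
  have hfinal : -(γ * min 1 lam * ‖d‖ ^ 2) ≤
      -(γ * min 1 lam / M ^ 2) * ‖g‖ ^ 2 := by
    rw [neg_mul, neg_le_neg_iff, div_mul_eq_mul_div, div_le_iff₀ (by positivity)]
    calc γ * min 1 lam * ‖g‖ ^ 2 ≤ γ * min 1 lam * (M ^ 2 * ‖d‖ ^ 2) :=
          mul_le_mul_of_nonneg_left hdge (by positivity)
      _ = γ * min 1 lam * ‖d‖ ^ 2 * M ^ 2 := by ring
  exact h2.trans hfinal
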